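/- Let Λ ⊆ R^m be a lattice and v ∈ Λ nonzero. For any vector w in the projected lattice Λ_⊥v, there exists a lattice vector x ∈ Λ whose projection orthogonal to v equals w and whose component along v has norm at most ‖v‖/2; consequently ‖x‖² ≤ ‖w‖² + ‖v‖²/4. -/
import Mathlib


open scoped RealInnerProductSpace

theorem lift_from_projected_lattice {m n : ℕ} (b : Fin n → EuclideanSpace ℝ (Fin m))
    (hb : LinearIndependent ℝ b)
    (L : Set (EuclideanSpace ℝ (Fin m)))
    (hL : L = (Submodule.span ℤ (Set.range b) : Submodule ℤ (EuclideanSpace ℝ (Fin m))))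
    (v : EuclideanSpace ℝ (Fin m)) (hvL : v ∈ L) (hv : v ≠ 0)
    (w : EuclideanSpace ℝ (Fin m))
    (hw : w ∈ (fun u => u - (⟪u, v⟫ / ⟪v, v⟫) • v) '' L) :
    ∃ x ∈ L, x - (⟪x, v⟫ / ⟪v, v⟫) • v = w ∧
      ‖(⟪x, v⟫ / ⟪v, v⟫) • v‖ ≤ ‖v‖ / 2 ∧
      ‖x‖ ^ 2 ≤ ‖w‖ ^ 2 + ‖v‖ ^ 2 / 4 := by
  obtain ⟨u, huL, hu⟩ := hw
  have hvv : ⟪v, v⟫ ≠ 0 := inner_self_ne_zero.mpr hv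
  set c : ℝ := ⟪u, v⟫ / ⟪v, v⟫ with hc
  set k : ℤ := round c with hk
  refine ⟨u - (k : ℝ) • v, ?_, ?_⟩
  · rw [hL] at huL hvL ⊢
    have : (k : ℝ) • v = k • v := Int.cast_smul_eq_zsmul ℝ k v
    rw [this]
    exact sub_mem huL (zsmul_mem hvL k)
  · have hxv : ⟪u - (k : ℝ) • v, v⟫ = ⟪u, v⟫ - (k : ℝ) * ⟪v, v⟫ := by
      rw [inner_sub_left, real_inner_smul_left]
    have hcoef : ⟪u - (k : ℝ) • v, v⟫ / ⟪v, v⟫ = c - k := by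
      rw [hxv, sub_div, hc, mul_div_assoc, div_self hvv, mul_one]
    have hwv : ⟪w, v⟫ = 0 := by
      rw [← hu]
      rw [inner_sub_left, real_inner_smul_left, div_mul_cancel₀ _ hvv, sub_self]
    have hproj : u - (k : ℝ) • v - (⟪u - (k : ℝ) • v, v⟫ / ⟪v, v⟫) • v = w := by
      rw [hcoef, ← hu]
      simp only [sub_smul]
      abel
    refine ⟨hproj, ?_, ?_⟩
    · rw [hcoef, norm_smul]
      have : |c - k| ≤ 1 / 2 := by
        simpa [abs_sub_comm] using abs_sub_round c
      calc ‖c - (k:ℝ)‖ * ‖v‖ ≤ (1/2) * ‖v‖ := by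
            apply mul_le_mul_of_nonneg_right _ (norm_nonneg v)
            simpa [Real.norm_eq_abs] using this
        _ = ‖v‖ / 2 := by ring
    · have hx : u - (k : ℝ) • v = w + (c - k) • v := by
        rw [← hproj, hcoef]; abel
      rw [hx]
      have horth : ⟪w, (c - (k:ℝ)) • v⟫ = 0 := by
        rw [real_inner_smul_right, hwv, mul_zero]
      have := norm_add_sq_real w ((c - (k:ℝ)) • v)
      rw [horth] at this
      rw [this]
      have hn : ‖(c - (k:ℝ)) • v‖ ^ 2 ≤ ‖v‖ ^ 2 / 4 := by
        rw [norm_smul, mul_pow]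
        have h1 : |c - (k:ℝ)| ≤ 1 / 2 := by
          simpa [abs_sub_comm] using abs_sub_round c
        have h2 : ‖c - (k:ℝ)‖ ^ 2 ≤ (1/2)^2 := by
          rw [Real.norm_eq_abs]
          exact pow_le_pow_left₀ (abs_nonneg _) h1 2
        nlinarith [sq_nonneg ‖v‖, norm_nonneg v]
      nlinarith [sq_nonneg ‖v‖]
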